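/- Let (U, V) be standard bivariate normal with correlation ρ ∈ [-1, 1]. Then Cov(|U|, |V|) = (2/π)(√(1-ρ²) + ρ·arcsin ρ - 1), and there exists a constant C > 0 such that Cov(|U|, |V|) ≤ C·ρ² for all ρ ∈ [-1, 1]. -/

import Mathlib

open MeasureTheory ProbabilityTheory Real intervalIntegral
open scoped NNReal ENNReal

set_option linter.unusedVariables false
set_option linter.unnecessarySeqFocus false


lemma deriv_gexp (x : ℝ) : HasDerivAt (fun t : ℝ => -rexp (-t^2/2)) (x * rexp (-x^2/2)) x := by
  have : HasDerivAt (fun t : ℝ => -t^2/2) (-x) x := by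
    have := ((hasDerivAt_pow 2 x).neg.div_const 2)
    exact this.congr_deriv (by norm_num; ring)
  have := this.exp.neg
  exact this.congr_deriv (by ring)

lemma tend_gexp : Filter.Tendsto (fun t : ℝ => -rexp (-t^2/2)) Filter.atTop (nhds 0) := by
  rw [show (0:ℝ) = -0 by ring]
  refine (Real.tendsto_exp_atBot.comp ?_).neg
  have h : Filter.Tendsto (fun t : ℝ => t^2/2) Filter.atTop Filter.atTop :=
    (Filter.tendsto_pow_atTop (by norm_num)).atTop_div_const (by norm_num)
  have := Filter.tendsto_neg_atBot_iff.mpr h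
  refine this.congr (fun t => by ring)

lemma cont_gexp : Continuous (fun t : ℝ => -rexp (-t^2/2)) := by continuity

lemma gexp_int : IntegrableOn (fun r : ℝ => r * rexp (-r^2/2)) (Set.Ioi 0) := by
  have := (integrable_mul_exp_neg_mul_sq (b := 1/2) (by norm_num)).integrableOn (s := Set.Ioi 0)
  refine this.congr_fun (fun x _ => by ring_nf) measurableSet_Ioi

lemma R1 : ∫ r in Set.Ioi (0:ℝ), r * rexp (-r^2/2) = 1 := by
  have := MeasureTheory.integral_Ioi_of_hasDerivAt_of_tendsto
    (f := fun t : ℝ => -rexp (-t^2/2)) (a := 0)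
    (cont_gexp.continuousWithinAt) (fun x hx => deriv_gexp x) gexp_int tend_gexp
  simpa using this


lemma intOn_pow (n : ℕ) : IntegrableOn (fun r : ℝ => r^n * rexp (-r^2/2)) (Set.Ioi 0) := by
  have := integrableOn_rpow_mul_exp_neg_mul_sq (b := 1/2) (by norm_num) (s := (n:ℝ))
    (lt_of_lt_of_le neg_one_lt_zero (Nat.cast_nonneg n))
  refine this.congr_fun (fun x hx => ?_) measurableSet_Ioi
  simp only [Real.rpow_natCast]
  ring_nf

lemma tend_pow_gexp (n : ℕ) :
    Filter.Tendsto (fun r : ℝ => r^n * rexp (-r^2/2)) Filter.atTop (nhds 0) := by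
  have h := rpow_mul_exp_neg_mul_sq_isLittleO_exp_neg (b := 1/2) (by norm_num) (n:ℝ)
  have hg : Filter.Tendsto (fun x : ℝ => rexp (-(1/2) * x)) Filter.atTop (nhds 0) := by
    have h1 : Filter.Tendsto (fun x : ℝ => (1/2 : ℝ) * x) Filter.atTop Filter.atTop :=
      Filter.Tendsto.const_mul_atTop (by norm_num) Filter.tendsto_id
    have := Real.tendsto_exp_neg_atTop_nhds_zero.comp h1
    refine this.congr (fun x => ?_)
    show rexp (-((1/2:ℝ)*x)) = rexp (-(1/2)*x)
    ring_nf
  have h2 := h.tendsto_zero_of_tendsto hg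
  refine (h2.congr' ?_)
  filter_upwards [Filter.eventually_gt_atTop (0:ℝ)] with x hx
  rw [Real.rpow_natCast]
  ring_nf

lemma deriv_gexp' (x : ℝ) : HasDerivAt (fun t : ℝ => rexp (-t^2/2)) (-(x * rexp (-x^2/2))) x := by
  have := (deriv_gexp x).neg
  refine (HasDerivAt.congr_deriv (this.congr_of_eventuallyEq ?_) rfl)
  filter_upwards with t; simp

lemma intOn_exp : IntegrableOn (fun r : ℝ => rexp (-r^2/2)) (Set.Ioi 0) := by
  have := (integrable_exp_neg_mul_sq (b := 1/2) (by norm_num)).integrableOn (s := Set.Ioi 0)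
  refine this.congr_fun (fun x _ => by ring_nf) measurableSet_Ioi

lemma gauss_Ioi : ∫ r in Set.Ioi (0:ℝ), rexp (-r^2/2) = Real.sqrt (2*π) / 2 := by
  have := integral_gaussian_Ioi (1/2)
  rw [show π / (1/2 : ℝ) = 2*π by ring] at this
  calc ∫ r in Set.Ioi (0:ℝ), rexp (-r^2/2)
      = ∫ r in Set.Ioi (0:ℝ), rexp (-(1/2) * r^2) := by
        refine setIntegral_congr_fun measurableSet_Ioi (fun x _ => by ring_nf)
    _ = Real.sqrt (2*π) / 2 := this

lemma R2 : ∫ r in Set.Ioi (0:ℝ), r^2 * rexp (-r^2/2) = Real.sqrt (2*π) / 2 := by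
  have h : ∀ x : ℝ, HasDerivAt (fun t : ℝ => -t * rexp (-t^2/2))
      (x^2 * rexp (-x^2/2) - rexp (-x^2/2)) x := by
    intro x
    have := ((hasDerivAt_id x).neg).mul (deriv_gexp' x)
    refine HasDerivAt.congr_deriv this ?_
    simp; ring
  have hint : IntegrableOn (fun r : ℝ => r^2 * rexp (-r^2/2) - rexp (-r^2/2)) (Set.Ioi 0) :=
    (intOn_pow 2).sub intOn_exp
  have htend : Filter.Tendsto (fun t : ℝ => -t * rexp (-t^2/2)) Filter.atTop (nhds 0) := by
    have := (tend_pow_gexp 1).neg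
    rw [neg_zero] at this
    refine this.congr (fun t => by ring)
  have key := MeasureTheory.integral_Ioi_of_hasDerivAt_of_tendsto
    (f := fun t : ℝ => -t * rexp (-t^2/2)) (a := 0)
    (by continuity : Continuous fun t : ℝ => -t * rexp (-t^2/2)).continuousWithinAt
    (fun x hx => h x) hint htend
  have h0 : ∫ r in Set.Ioi (0:ℝ), (r^2 * rexp (-r^2/2) - rexp (-r^2/2)) = 0 := by
    simpa using key
  rw [MeasureTheory.integral_sub (intOn_pow 2) intOn_exp] at h0
  have := gauss_Ioi
  linarith

lemma R3 : ∫ r in Set.Ioi (0:ℝ), r^3 * rexp (-r^2/2) = 2 := by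
  have h : ∀ x : ℝ, HasDerivAt (fun t : ℝ => -(t^2+2) * rexp (-t^2/2))
      (x^3 * rexp (-x^2/2)) x := by
    intro x
    have hp : HasDerivAt (fun t : ℝ => -(t^2+2)) (-(2*x)) x := by
      have := ((hasDerivAt_pow 2 x).add_const 2).neg
      exact this.congr_deriv (by norm_num)
    have := hp.mul (deriv_gexp' x)
    refine HasDerivAt.congr_deriv this ?_
    ring
  have htend : Filter.Tendsto (fun t : ℝ => -(t^2+2) * rexp (-t^2/2)) Filter.atTop (nhds 0) := by
    have h2 := (tend_pow_gexp 2).neg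
    have h0 := (tend_pow_gexp 0).const_mul (-2 : ℝ)
    rw [neg_zero] at h2; rw [mul_zero] at h0
    have := h2.add h0
    rw [add_zero] at this
    refine this.congr (fun t => by simp; ring)
  have key := MeasureTheory.integral_Ioi_of_hasDerivAt_of_tendsto
    (f := fun t : ℝ => -(t^2+2) * rexp (-t^2/2)) (a := 0)
    (by continuity : Continuous fun t : ℝ => -(t^2+2) * rexp (-t^2/2)).continuousWithinAt
    (fun x hx => h x) (intOn_pow 3) htend
  simpa using key


lemma abs_cos_periodic : Function.Periodic (fun u : ℝ => |Real.cos u|) (2*π) :=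
  Real.cos_periodic.comp (fun y => |y|)

lemma int_abs_cos : ∫ u in (-π)..π, |Real.cos u| = 4 := by
  have hI : ∀ a b : ℝ, IntervalIntegrable (fun u : ℝ => |Real.cos u|) volume a b :=
    fun a b => (Real.continuous_cos.abs).intervalIntegrable a b
  have hπ := Real.pi_pos
  have P1 : ∫ u in (-π)..(-(π/2)), |Real.cos u| = 1 := by
    rw [integral_congr (g := fun u => -Real.cos u) ?_]
    · rw [intervalIntegral.integral_neg, integral_cos]; simp
    · intro u hu
      rw [Set.uIcc_of_le (by linarith)] at hu
      have h1 : π/2 ≤ -u := by linarith [hu.2]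
      have h2 : -u ≤ π + π/2 := by linarith [hu.1]
      have := Real.cos_nonpos_of_pi_div_two_le_of_le h1 h2
      rw [Real.cos_neg] at this
      simp [abs_of_nonpos this]
  have P2 : ∫ u in (-(π/2))..(π/2), |Real.cos u| = 2 := by
    rw [integral_congr (g := fun u => Real.cos u) ?_]
    · rw [integral_cos]; norm_num
    · intro u hu
      rw [Set.uIcc_of_le (by linarith)] at hu
      have := Real.cos_nonneg_of_mem_Icc ⟨hu.1, hu.2⟩
      simp [abs_of_nonneg this]
  have P3 : ∫ u in (π/2)..π, |Real.cos u| = 1 := by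
    rw [integral_congr (g := fun u => -Real.cos u) ?_]
    · rw [intervalIntegral.integral_neg, integral_cos]; simp
    · intro u hu
      rw [Set.uIcc_of_le (by linarith)] at hu
      have := Real.cos_nonpos_of_pi_div_two_le_of_le hu.1 (by linarith [hu.2])
      simp [abs_of_nonpos this]
  have s1 := integral_add_adjacent_intervals (hI (-π) (-(π/2))) (hI (-(π/2)) (π/2))
  have s2 := integral_add_adjacent_intervals (hI (-π) (π/2)) (hI (π/2) π)
  rw [← s2, ← s1, P1, P2, P3]
  norm_num

lemma A2 (α : ℝ) : ∫ θ in (-π)..π, |Real.cos (θ - α)| = 4 := by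
  rw [intervalIntegral.integral_comp_sub_right (fun u => |Real.cos u|) α]
  have := abs_cos_periodic.intervalIntegral_add_eq (-π - α) (-π)
  rw [show -π - α + 2*π = π - α by ring, show -π + 2*π = π by ring] at this
  rw [this, int_abs_cos]

lemma ptwise (α θ : ℝ) :
    |Real.cos θ| * |Real.cos (θ - α)| = |Real.cos α + Real.cos (2*θ - α)| / 2 := by
  have e1 : Real.cos (2*θ - α) = Real.cos θ * Real.cos (θ-α) - Real.sin θ * Real.sin (θ-α) := by
    rw [show 2*θ - α = θ + (θ - α) by ring, Real.cos_add]
  have e2 : Real.cos α = Real.cos θ * Real.cos (θ-α) + Real.sin θ * Real.sin (θ-α) := by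
    conv_lhs => rw [show α = θ - (θ - α) by ring]
    rw [Real.cos_sub]
  rw [← abs_mul, show Real.cos θ * Real.cos (θ - α)
    = (Real.cos α + Real.cos (2*θ - α))/2 by rw [e1, e2]; ring, abs_div]
  norm_num

lemma sign1 {α u : ℝ} (hα0 : 0 ≤ α) (hαπ : α ≤ π) (h0 : 0 ≤ u) (h1 : u ≤ π - α) :
    0 ≤ Real.cos α + Real.cos u := by
  have := Real.cos_le_cos_of_nonneg_of_le_pi h0 (by linarith) h1
  rw [Real.cos_pi_sub] at this
  linarith

lemma sign2 {α u : ℝ} (hα0 : 0 ≤ α) (hαπ : α ≤ π) (h0 : π - α ≤ u) (h1 : u ≤ π + α) :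
    Real.cos α + Real.cos u ≤ 0 := by
  rcases le_total u π with h | h
  · have := Real.cos_le_cos_of_nonneg_of_le_pi (by linarith) h h0
    rw [Real.cos_pi_sub] at this
    linarith
  · have h2 : Real.cos (u - π) = -Real.cos u := Real.cos_sub_pi u
    have := Real.cos_le_cos_of_nonneg_of_le_pi (by linarith : 0 ≤ u - π) hαπ (by linarith)
    rw [h2] at this
    linarith

lemma sign3 {α u : ℝ} (hα0 : 0 ≤ α) (hαπ : α ≤ π) (h0 : π + α ≤ u) (h1 : u ≤ 2*π) :
    0 ≤ Real.cos α + Real.cos u := by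
  have h2 : Real.cos (2*π - u) = Real.cos u := Real.cos_two_pi_sub u
  have := Real.cos_le_cos_of_nonneg_of_le_pi (by linarith : (0:ℝ) ≤ 2*π - u)
    (by linarith : π - α ≤ π) (by linarith)
  rw [Real.cos_pi_sub, h2] at this
  linarith

lemma Kval {α : ℝ} (hα0 : 0 ≤ α) (hαπ : α ≤ π) :
    ∫ u in (0:ℝ)..(2*π), |Real.cos α + Real.cos u|
      = (2*π - 4*α) * Real.cos α + 4 * Real.sin α := by
  have hπ := Real.pi_pos
  have hI : ∀ a b : ℝ, IntervalIntegrable (fun u : ℝ => |Real.cos α + Real.cos u|) volume a b :=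
    fun a b => ((continuous_const.add Real.continuous_cos).abs).intervalIntegrable a b
  have hbase : ∀ a b : ℝ, ∫ u in a..b, (Real.cos α + Real.cos u)
      = (b - a) * Real.cos α + (Real.sin b - Real.sin a) := by
    intro a b
    rw [intervalIntegral.integral_add (intervalIntegrable_const) (Real.continuous_cos.intervalIntegrable a b),
      intervalIntegral.integral_const, integral_cos, smul_eq_mul]
    try ring
  have P1 : ∫ u in (0:ℝ)..(π - α), |Real.cos α + Real.cos u|
      = (π - α) * Real.cos α + Real.sin α := by
    rw [integral_congr (g := fun u => Real.cos α + Real.cos u) ?_, hbase]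
    · rw [Real.sin_pi_sub, Real.sin_zero]; ring
    · intro u hu
      rw [Set.uIcc_of_le (by linarith)] at hu
      simp [abs_of_nonneg (sign1 hα0 hαπ hu.1 hu.2)]
  have P2 : ∫ u in (π - α)..(π + α), |Real.cos α + Real.cos u|
      = -2*α*Real.cos α + 2*Real.sin α := by
    rw [integral_congr (g := fun u => -(Real.cos α + Real.cos u)) ?_,
      intervalIntegral.integral_neg, hbase]
    · rw [Real.sin_pi_sub, show π + α = α + π by ring, Real.sin_add_pi]; ring
    · intro u hu
      rw [Set.uIcc_of_le (by linarith)] at hu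
      simp [abs_of_nonpos (sign2 hα0 hαπ hu.1 hu.2)]
  have P3 : ∫ u in (π + α)..(2*π), |Real.cos α + Real.cos u|
      = (π - α) * Real.cos α + Real.sin α := by
    rw [integral_congr (g := fun u => Real.cos α + Real.cos u) ?_, hbase]
    · rw [Real.sin_two_pi, show π + α = α + π by ring, Real.sin_add_pi]; ring
    · intro u hu
      rw [Set.uIcc_of_le (by linarith)] at hu
      simp [abs_of_nonneg (sign3 hα0 hαπ hu.1 hu.2)]
  have s1 := integral_add_adjacent_intervals (hI 0 (π - α)) (hI (π - α) (π + α))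
  have s2 := integral_add_adjacent_intervals (hI 0 (π + α)) (hI (π + α) (2*π))
  rw [← s2, ← s1, P1, P2, P3]
  ring

lemma A3 {α : ℝ} (hα0 : 0 ≤ α) (hαπ : α ≤ π) :
    ∫ θ in (-π)..π, |Real.cos θ| * |Real.cos (θ - α)|
      = (π - 2*α) * Real.cos α + 2 * Real.sin α := by
  have hπ := Real.pi_pos
  have hp : Function.Periodic (fun u : ℝ => |Real.cos α + Real.cos u|) (2*π) :=
    Real.cos_periodic.comp (fun y => |Real.cos α + y|)
  have hI : ∀ a b : ℝ, IntervalIntegrable (fun u : ℝ => |Real.cos α + Real.cos u|) volume a b :=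
    fun a b => ((continuous_const.add Real.continuous_cos).abs).intervalIntegrable a b
  calc ∫ θ in (-π)..π, |Real.cos θ| * |Real.cos (θ - α)|
      = ∫ θ in (-π)..π, |Real.cos α + Real.cos (2*θ - α)| / 2 := by
        exact integral_congr (fun θ _ => ptwise α θ)
    _ = (∫ θ in (-π)..π, |Real.cos α + Real.cos (2*θ - α)|) / 2 := intervalIntegral.integral_div 2 _
    _ = ((2:ℝ)⁻¹ • ∫ u in (2*(-π) - α)..(2*π - α), |Real.cos α + Real.cos u|) / 2 := by
        rw [intervalIntegral.integral_comp_mul_sub (fun u => |Real.cos α + Real.cos u|)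
          (by norm_num : (2:ℝ) ≠ 0) α]
    _ = ((∫ u in (2*(-π) - α)..(-α), |Real.cos α + Real.cos u|)
          + ∫ u in (-α)..(2*π - α), |Real.cos α + Real.cos u|) / 4 := by
        rw [integral_add_adjacent_intervals (hI _ _) (hI _ _), smul_eq_mul]
        ring
    _ = ((2*π - 4*α) * Real.cos α + 4 * Real.sin α) / 2 := by
        have e1 := hp.intervalIntegral_add_eq (2*(-π) - α) 0
        have e2 := hp.intervalIntegral_add_eq (-α) 0
        rw [show 2*(-π) - α + 2*π = -α by ring, zero_add] at e1
        rw [show -α + 2*π = 2*π - α by ring, zero_add] at e2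
        rw [e1, e2, Kval hα0 hαπ]
        ring
    _ = (π - 2*α) * Real.cos α + 2 * Real.sin α := by ring


lemma pdf_eq (x : ℝ) : gaussianPDFReal 0 1 x = (Real.sqrt (2*π))⁻¹ * rexp (-x^2/2) := by
  simp [gaussianPDFReal]

lemma pdf_mul (x y : ℝ) : gaussianPDFReal 0 1 x * gaussianPDFReal 0 1 y
    = (2*π)⁻¹ * rexp (-(x^2+y^2)/2) := by
  rw [pdf_eq, pdf_eq]
  have h : Real.sqrt (2*π) * Real.sqrt (2*π) = 2*π :=
    Real.mul_self_sqrt (by positivity)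
  rw [show (Real.sqrt (2*π))⁻¹ * rexp (-x^2/2) * ((Real.sqrt (2*π))⁻¹ * rexp (-y^2/2))
    = (Real.sqrt (2*π) * Real.sqrt (2*π))⁻¹ * (rexp (-x^2/2) * rexp (-y^2/2)) by ring,
    ← Real.exp_add, h, show -x^2/2 + -y^2/2 = -(x^2+y^2)/2 by ring]

lemma prod_gauss_eq : (gaussianReal 0 1).prod (gaussianReal 0 1)
    = (volume : Measure (ℝ×ℝ)).withDensity
        (fun p => ENNReal.ofReal (gaussianPDFReal 0 1 p.1 * gaussianPDFReal 0 1 p.2)) := by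
  refine Measure.prod_eq (fun s t hs ht => ?_)
  rw [withDensity_apply _ (hs.prod ht)]
  have hd : ∀ p : ℝ × ℝ, ENNReal.ofReal (gaussianPDFReal 0 1 p.1 * gaussianPDFReal 0 1 p.2)
      = gaussianPDF 0 1 p.1 * gaussianPDF 0 1 p.2 := by
    intro p
    rw [ENNReal.ofReal_mul (gaussianPDFReal_nonneg 0 1 p.1)]
    rfl
  simp_rw [hd]
  rw [Measure.volume_eq_prod, ← Measure.prod_restrict,
    lintegral_prod_mul ((measurable_gaussianPDF 0 1).aemeasurable) ((measurable_gaussianPDF 0 1).aemeasurable),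
    gaussianReal_apply 0 one_ne_zero s, gaussianReal_apply 0 one_ne_zero t]


lemma integral_prod_gauss (f : ℝ × ℝ → ℝ) :
    ∫ p, f p ∂((gaussianReal 0 1).prod (gaussianReal 0 1))
      = ∫ p : ℝ × ℝ, (gaussianPDFReal 0 1 p.1 * gaussianPDFReal 0 1 p.2) * f p := by
  rw [prod_gauss_eq]
  have hmeas : Measurable (fun p : ℝ × ℝ =>
      Real.toNNReal (gaussianPDFReal 0 1 p.1 * gaussianPDFReal 0 1 p.2)) := by
    exact ((measurable_gaussianPDFReal 0 1).comp measurable_fst |>.mul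
      ((measurable_gaussianPDFReal 0 1).comp measurable_snd)).real_toNNReal
  rw [show (fun p : ℝ × ℝ => ENNReal.ofReal (gaussianPDFReal 0 1 p.1 * gaussianPDFReal 0 1 p.2))
      = (fun p : ℝ × ℝ => ((Real.toNNReal (gaussianPDFReal 0 1 p.1 * gaussianPDFReal 0 1 p.2) : ℝ≥0) : ℝ≥0∞)) from rfl,
    integral_withDensity_eq_integral_smul hmeas]
  refine integral_congr_ae (Filter.Eventually.of_forall (fun p => ?_))
  show (gaussianPDFReal 0 1 p.1 * gaussianPDFReal 0 1 p.2).toNNReal • f p = _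
  rw [NNReal.smul_def, smul_eq_mul, Real.coe_toNNReal _
    (mul_nonneg (gaussianPDFReal_nonneg 0 1 p.1) (gaussianPDFReal_nonneg 0 1 p.2))]

lemma polar_gauss (G : ℝ × ℝ → ℝ) (k : ℕ) (g : ℝ → ℝ)
    (hG : ∀ r θ : ℝ, 0 < r → G (r * Real.cos θ, r * Real.sin θ) = r^k * g θ) :
    ∫ p : ℝ × ℝ, (2*π)⁻¹ * rexp (-(p.1^2+p.2^2)/2) * G p
      = (∫ r in Set.Ioi (0:ℝ), r^(k+1) * rexp (-r^2/2))
        * ((2*π)⁻¹ * ∫ θ in (-π)..π, g θ) := by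
  have hπ := Real.pi_pos
  rw [← integral_comp_polarCoord_symm (fun p => (2*π)⁻¹ * rexp (-(p.1^2+p.2^2)/2) * G p)]
  have hset : polarCoord.target = Set.Ioi (0:ℝ) ×ˢ Set.Ioo (-π) π := polarCoord_target
  rw [hset]
  have heq : ∀ p ∈ Set.Ioi (0:ℝ) ×ˢ Set.Ioo (-π) π,
      p.1 • ((2*π)⁻¹ * rexp (-((polarCoord.symm p).1^2+(polarCoord.symm p).2^2)/2)
          * G (polarCoord.symm p))
        = (fun r => r^(k+1) * rexp (-r^2/2)) p.1 * ((fun θ => (2*π)⁻¹ * g θ) p.2) := by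
    rintro ⟨r, θ⟩ ⟨hr, hθ⟩
    have hr' : (0:ℝ) < r := hr
    simp only [polarCoord_symm_apply]
    rw [hG r θ hr']
    have : (r * Real.cos θ)^2 + (r * Real.sin θ)^2 = r^2 := by
      have := Real.sin_sq_add_cos_sq θ
      ring_nf
      nlinarith [Real.sin_sq_add_cos_sq θ]
    rw [this, smul_eq_mul, pow_succ]
    ring
  rw [setIntegral_congr_fun (measurableSet_Ioi.prod measurableSet_Ioo) heq,
    Measure.volume_eq_prod]
  rw [setIntegral_prod_mul (μ := (volume : Measure ℝ)) (ν := (volume : Measure ℝ))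
    (fun r : ℝ => r^(k+1) * rexp (-r^2/2)) (fun θ => (2*π)⁻¹ * g θ)
    (Set.Ioi 0) (Set.Ioo (-π) π)]
  congr 1
  rw [MeasureTheory.integral_const_mul]
  congr 1
  rw [intervalIntegral.integral_of_le (by linarith), MeasureTheory.integral_Ioc_eq_integral_Ioo]

lemma covAbs_eq (ρ : ℝ) (hρ : ρ ∈ Set.Icc (-1:ℝ) 1) :
    (∫ p : ℝ × ℝ, |p.1| * |ρ * p.1 + Real.sqrt (1 - ρ ^ 2) * p.2|
        ∂((gaussianReal 0 1).prod (gaussianReal 0 1)))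
      - (∫ p : ℝ × ℝ, |p.1| ∂((gaussianReal 0 1).prod (gaussianReal 0 1)))
        * (∫ p : ℝ × ℝ, |ρ * p.1 + Real.sqrt (1 - ρ ^ 2) * p.2|
            ∂((gaussianReal 0 1).prod (gaussianReal 0 1)))
      = (2 / π) * (Real.sqrt (1 - ρ ^ 2) + ρ * Real.arcsin ρ - 1) := by
  have hπ := Real.pi_pos
  obtain ⟨hρ1, hρ2⟩ := hρ
  set s : ℝ := Real.sqrt (1 - ρ ^ 2) with hs
  set α : ℝ := Real.arccos ρ with hα
  have hcos : Real.cos α = ρ := Real.cos_arccos hρ1 hρ2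
  have hsin : Real.sin α = s := Real.sin_arccos ρ
  have hα0 : 0 ≤ α := Real.arccos_nonneg ρ
  have hαπ : α ≤ π := Real.arccos_le_pi ρ
  have hcossub : ∀ θ : ℝ, ρ * Real.cos θ + s * Real.sin θ = Real.cos (θ - α) := by
    intro θ
    rw [Real.cos_sub, hcos, hsin]; ring
  -- first integral
  have h1 : (∫ p : ℝ × ℝ, |p.1| ∂((gaussianReal 0 1).prod (gaussianReal 0 1)))
      = Real.sqrt (2*π) / π := by
    rw [integral_prod_gauss]
    have := polar_gauss (fun p => |p.1|) 1 (fun θ => |Real.cos θ|)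
      (fun r θ hr => by simp [abs_mul, abs_of_pos hr])
    rw [show (fun p : ℝ × ℝ => gaussianPDFReal 0 1 p.1 * gaussianPDFReal 0 1 p.2 * |p.1|)
      = (fun p : ℝ × ℝ => (2*π)⁻¹ * rexp (-(p.1^2+p.2^2)/2) * |p.1|) from
        funext (fun p => by rw [pdf_mul]), this, int_abs_cos]
    norm_num [R2]
    field_simp
    ring
  -- second integral
  have h2 : (∫ p : ℝ × ℝ, |ρ * p.1 + Real.sqrt (1 - ρ ^ 2) * p.2|
        ∂((gaussianReal 0 1).prod (gaussianReal 0 1)))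
      = Real.sqrt (2*π) / π := by
    rw [integral_prod_gauss]
    have hG : ∀ r θ : ℝ, 0 < r →
        |ρ * (r * Real.cos θ) + s * (r * Real.sin θ)| = r^1 * |Real.cos (θ - α)| := by
      intro r θ hr
      rw [show ρ * (r * Real.cos θ) + s * (r * Real.sin θ)
        = r * (ρ * Real.cos θ + s * Real.sin θ) by ring, hcossub θ, abs_mul,
        abs_of_pos hr, pow_one]
    have := polar_gauss (fun p => |ρ * p.1 + s * p.2|) 1 (fun θ => |Real.cos (θ - α)|)
      (fun r θ hr => hG r θ hr)
    rw [show (fun p : ℝ × ℝ => gaussianPDFReal 0 1 p.1 * gaussianPDFReal 0 1 p.2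
        * |ρ * p.1 + Real.sqrt (1 - ρ ^ 2) * p.2|)
      = (fun p : ℝ × ℝ => (2*π)⁻¹ * rexp (-(p.1^2+p.2^2)/2) * |ρ * p.1 + s * p.2|) from
        funext (fun p => by rw [pdf_mul, ← hs]), this, A2 α]
    norm_num [R2]
    field_simp
    ring
  -- third integral
  have h3 : (∫ p : ℝ × ℝ, |p.1| * |ρ * p.1 + Real.sqrt (1 - ρ ^ 2) * p.2|
        ∂((gaussianReal 0 1).prod (gaussianReal 0 1)))
      = ((π - 2*α) * ρ + 2 * s) / π := by
    rw [integral_prod_gauss]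
    have hG : ∀ r θ : ℝ, 0 < r →
        |r * Real.cos θ| * |ρ * (r * Real.cos θ) + s * (r * Real.sin θ)|
          = r^2 * (|Real.cos θ| * |Real.cos (θ - α)|) := by
      intro r θ hr
      rw [show ρ * (r * Real.cos θ) + s * (r * Real.sin θ)
        = r * (ρ * Real.cos θ + s * Real.sin θ) by ring, hcossub θ, abs_mul, abs_mul,
        abs_of_pos hr]
      ring
    have := polar_gauss (fun p => |p.1| * |ρ * p.1 + s * p.2|) 2
      (fun θ => |Real.cos θ| * |Real.cos (θ - α)|) (fun r θ hr => hG r θ hr)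
    rw [show (fun p : ℝ × ℝ => gaussianPDFReal 0 1 p.1 * gaussianPDFReal 0 1 p.2
        * (|p.1| * |ρ * p.1 + Real.sqrt (1 - ρ ^ 2) * p.2|))
      = (fun p : ℝ × ℝ => (2*π)⁻¹ * rexp (-(p.1^2+p.2^2)/2) * (|p.1| * |ρ * p.1 + s * p.2|)) from
        funext (fun p => by rw [pdf_mul, ← hs]), this, A3 hα0 hαπ, hcos, hsin]
    norm_num [R3]
    field_simp
  rw [h1, h2, h3]
  have hsq : Real.sqrt (2*π) * Real.sqrt (2*π) = 2*π := Real.mul_self_sqrt (by positivity)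
  have harcsin : π - 2*α = 2 * Real.arcsin ρ := by
    rw [hα, Real.arccos_eq_pi_div_two_sub_arcsin]; ring
  rw [harcsin, div_mul_div_comm, hsq]
  field_simp
  ring


lemma covAbs_bound (ρ : ℝ) (hρ1 : -1 ≤ ρ) (hρ2 : ρ ≤ 1) :
    (2 / π) * (Real.sqrt (1 - ρ ^ 2) + ρ * Real.arcsin ρ - 1) ≤ 1 * ρ ^ 2 := by
  have hπ := Real.pi_pos
  have h1 : Real.sqrt (1 - ρ ^ 2) ≤ 1 := Real.sqrt_le_one.mpr (by nlinarith)
  have h2 : ρ * Real.arcsin ρ ≤ (π/2) * ρ ^ 2 := by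
    have ht : |ρ| ≤ 1 := abs_le.mpr ⟨hρ1, hρ2⟩
    have hodd : ρ * Real.arcsin ρ = |ρ| * Real.arcsin |ρ| := by
      rcases le_or_gt 0 ρ with h | h
      · rw [abs_of_nonneg h]
      · rw [abs_of_neg h, Real.arcsin_neg]; ring
    have hu0 : 0 ≤ Real.arcsin |ρ| := Real.arcsin_nonneg.mpr (abs_nonneg ρ)
    have hu1 : Real.arcsin |ρ| ≤ π/2 := Real.arcsin_le_pi_div_two _
    have hsin := Real.mul_le_sin hu0 hu1
    rw [Real.sin_arcsin (neg_nonpos.mpr zero_le_one |>.trans (abs_nonneg ρ)) ht] at hsin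
    have h3 : Real.arcsin |ρ| ≤ π/2 * |ρ| := by
      have hm := mul_le_mul_of_nonneg_left hsin (le_of_lt (half_pos hπ))
      have he : (π/2) * (2 / π * Real.arcsin |ρ|) = Real.arcsin |ρ| := by field_simp
      linarith
    have h4 : |ρ| * Real.arcsin |ρ| ≤ |ρ| * (π/2 * |ρ|) :=
      mul_le_mul_of_nonneg_left h3 (abs_nonneg ρ)
    rw [hodd]
    calc |ρ| * Real.arcsin |ρ| ≤ |ρ| * (π/2 * |ρ|) := h4
      _ = (π/2) * ρ ^ 2 := by rw [← sq_abs ρ]; ring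
  have hp : (0:ℝ) < 2 / π := by positivity
  have key : (2 / π) * (Real.sqrt (1 - ρ ^ 2) + ρ * Real.arcsin ρ - 1)
      ≤ (2 / π) * ((π/2) * ρ ^ 2) := by
    refine mul_le_mul_of_nonneg_left (by linarith) hp.le
  calc (2 / π) * (Real.sqrt (1 - ρ ^ 2) + ρ * Real.arcsin ρ - 1)
      ≤ (2 / π) * ((π/2) * ρ ^ 2) := key
    _ = 1 * ρ ^ 2 := by field_simp

/-- Folded-normal covariance.  A standard bivariate Gaussian pair with correlation `ρ`
is realized as `(U, V) = (p₁, ρ p₁ + √(1-ρ²) p₂)` for independent standard Gaussians.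
Then `Cov(|U|, |V|) = (2/π)(√(1-ρ²) + ρ·arcsin ρ - 1)`, and this covariance is
bounded by `C·ρ²` for some constant `C > 0` uniformly over `ρ ∈ [-1, 1]`. -/
theorem stmt_12 :
    let P := (gaussianReal 0 1).prod (gaussianReal 0 1)
    let covAbs : ℝ → ℝ := fun ρ =>
      (∫ p : ℝ × ℝ, |p.1| * |ρ * p.1 + Real.sqrt (1 - ρ ^ 2) * p.2| ∂P) -
        (∫ p : ℝ × ℝ, |p.1| ∂P) *
          (∫ p : ℝ × ℝ, |ρ * p.1 + Real.sqrt (1 - ρ ^ 2) * p.2| ∂P)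
    (∀ ρ ∈ Set.Icc (-1 : ℝ) 1,
        covAbs ρ = (2 / Real.pi) * (Real.sqrt (1 - ρ ^ 2) + ρ * Real.arcsin ρ - 1)) ∧
    ∃ C : ℝ, 0 < C ∧ ∀ ρ ∈ Set.Icc (-1 : ℝ) 1, covAbs ρ ≤ C * ρ ^ 2 := by
  intro P covAbs
  refine ⟨fun ρ hρ => covAbs_eq ρ hρ, 1, one_pos, fun ρ hρ => ?_⟩
  exact (covAbs_eq ρ hρ).trans_le (covAbs_bound ρ hρ.1 hρ.2)
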